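/- Form the graph G_{a,b,k} from two vertices v and w by adding a internally disjoint v,w-paths of length 3k+1 and b internally disjoint v,w-paths of length 3k+2 (all paths internally disjoint from each other). If a and b are odd, and D is a subset of V(G_{a,b,k}) such that |N[x] ∩ D| is odd for every internal vertex x of the paths, then also |N[v] ∩ D| and |N[w] ∩ D| are odd. -/

import Mathlib

open SimpleGraph Finset
open scoped Classical

/-- The closed neighborhood `N[v]` of a vertex `v`. -/
def closedNbhd {V : Type*} (G : SimpleGraph V) (v : V) : Set V :=
  insert v (G.neighborSet v)

/-- `D` is an odd-dominating set: `|N[v] ∩ D|` is odd for every vertex `v`. -/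
def OddDomSet {V : Type*} (G : SimpleGraph V) (D : Set V) : Prop :=
  ∀ v, Odd ((closedNbhd G v ∩ D).ncard)

/-- `f` is an odd-sum coloring: a proper coloring with positive integer colors
such that the sum of colors over each closed neighborhood is odd. -/
def IsOddSumColoring {V : Type*} [Fintype V] (G : SimpleGraph V) (f : V → ℕ) : Prop :=
  (∀ v, 0 < f v) ∧ (∀ ⦃a b⦄, G.Adj a b → f a ≠ f b) ∧
  (∀ v, Odd (∑ w ∈ (closedNbhd G v).toFinset, f w))

/-- The odd-sum chromatic number: minimum number of colors used in an odd-sum coloring. -/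
noncomputable def chiOS {V : Type*} [Fintype V] (G : SimpleGraph V) : ℕ :=
  sInf {n | ∃ f : V → ℕ, IsOddSumColoring G f ∧ (Finset.univ.image f).card = n}

/-- Vertex type of `G_{a,b,k}`: the two hub vertices `v`, `w` (left summand),
the internal vertices of the `a` paths of length `3k+1` (each with `3k` internal
vertices), and the internal vertices of the `b` paths of length `3k+2`
(each with `3k+1` internal vertices). -/
abbrev GabkVert (a b k : ℕ) : Type :=
  (Unit ⊕ Unit) ⊕ ((Fin a × Fin (3 * k)) ⊕ (Fin b × Fin (3 * k + 1)))

/-- The graph `G_{a,b,k}`: two vertices `v` and `w` joined by `a` internally disjoint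
paths of length `3k+1` and `b` internally disjoint paths of length `3k+2`. -/
def Gabk (a b k : ℕ) : SimpleGraph (GabkVert a b k) :=
  SimpleGraph.fromRel (fun x y =>
    match x, y with
    | .inl (.inl _), .inr (.inl (_, j)) => j.val = 0
    | .inl (.inl _), .inr (.inr (_, j)) => j.val = 0
    | .inl (.inr _), .inr (.inl (_, j)) => j.val = 3 * k - 1
    | .inl (.inr _), .inr (.inr (_, j)) => j.val = 3 * k
    | .inr (.inl (i, j)), .inr (.inl (i', j')) => i = i' ∧ j.val + 1 = j'.val
    | .inr (.inr (i, j)), .inr (.inr (i', j')) => i = i' ∧ j.val + 1 = j'.val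
    | _, _ => False)

namespace GabkAux

lemma odd_iff_zmod (n : ℕ) : Odd n ↔ (n : ZMod 2) = 1 := by
  rw [Nat.odd_iff, ← ZMod.natCast_mod]
  rcases Nat.mod_two_eq_zero_or_one n with h | h <;> rw [h] <;> simp

lemma parity_eq {V : Type*} [Fintype V] (S D : Set V) :
    (((S ∩ D).ncard : ZMod 2)) = ∑ y ∈ S.toFinset, (if y ∈ D then (1:ZMod 2) else 0) := by
  classical
  rw [Set.ncard_eq_toFinset_card']
  have h : (S ∩ D).toFinset = S.toFinset.filter (· ∈ D) := by ext y; simp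
  rw [h, Finset.card_filter]
  push_cast
  rfl

lemma sum3 {α β : Type*} [DecidableEq α] [AddCommMonoid β] {x y z : α} (f : α → β)
    (hxy : x ≠ y) (hxz : x ≠ z) (hyz : y ≠ z) :
    ∑ t ∈ ({x, y, z} : Finset α), f t = f x + f y + f z := by
  rw [Finset.sum_insert (by simp [hxy, hxz]), Finset.sum_insert (by simp [hyz]),
    Finset.sum_singleton, add_assoc]

variable {a b k : ℕ}

def vV (a b k : ℕ) : GabkVert a b k := Sum.inl (Sum.inl ())
def wV (a b k : ℕ) : GabkVert a b k := Sum.inl (Sum.inr ())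
def AV {a b k : ℕ} (i : Fin a) (j : Fin (3*k)) : GabkVert a b k := Sum.inr (Sum.inl (i, j))
def BV {a b k : ℕ} (i : Fin b) (j : Fin (3*k+1)) : GabkVert a b k := Sum.inr (Sum.inr (i, j))

def paF (i : Fin a) (t : ℕ) : GabkVert a b k :=
  if _h0 : t = 0 then vV a b k
  else if _h : t ≤ 3*k then AV i ⟨t-1, by omega⟩ else wV a b k

def pbF (i : Fin b) (t : ℕ) : GabkVert a b k :=
  if _h0 : t = 0 then vV a b k
  else if _h : t ≤ 3*k+1 then BV i ⟨t-1, by omega⟩ else wV a b k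

lemma paF_inj (i : Fin a) {s t : ℕ} (hs : s ≤ 3*k+1) (ht : t ≤ 3*k+1)
    (h : (paF i s : GabkVert a b k) = paF i t) : s = t := by
  unfold paF at h
  split_ifs at h <;> simp [vV, wV, AV, Fin.ext_iff] at h <;> omega

lemma pbF_inj (i : Fin b) {s t : ℕ} (hs : s ≤ 3*k+2) (ht : t ≤ 3*k+2)
    (h : (pbF i s : GabkVert a b k) = pbF i t) : s = t := by
  unfold pbF at h
  split_ifs at h <;> simp [vV, wV, BV, Fin.ext_iff] at h <;> omega

lemma paF_succ (i : Fin a) (j : Fin (3*k)) :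
    (paF i (j.val + 1) : GabkVert a b k) = AV i j := by
  have hj := j.isLt
  unfold paF
  rw [dif_neg (by omega), dif_pos (by omega)]
  simp [AV, Fin.ext_iff]

lemma pbF_succ (i : Fin b) (j : Fin (3*k+1)) :
    (pbF i (j.val + 1) : GabkVert a b k) = BV i j := by
  have hj := j.isLt
  unfold pbF
  rw [dif_neg (by omega), dif_pos (by omega)]
  simp [BV, Fin.ext_iff]


lemma cnA (i : Fin a) (j : Fin (3*k)) :
    (closedNbhd (Gabk a b k) (AV i j)).toFinset =
      ({paF i j.val, AV i j, paF i (j.val + 2)} : Finset (GabkVert a b k)) := by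
  have hj := j.isLt
  by_cases h0 : j.val = 0 <;> by_cases hl : j.val + 1 = 3*k
  · omega
  · have e1 : (paF i j.val : GabkVert a b k) = vV a b k := by
      unfold paF; rw [dif_pos h0]
    have e2 : (paF i (j.val + 2) : GabkVert a b k) = AV i ⟨j.val + 1, by omega⟩ := by
      unfold paF; rw [dif_neg (by omega), dif_pos (by omega)]; simp [AV, Fin.ext_iff]
    rw [e1, e2]
    ext y
    rw [Set.mem_toFinset]
    simp only [closedNbhd, Set.mem_toFinset, Set.mem_insert_iff, SimpleGraph.mem_neighborSet,
      Gabk, SimpleGraph.fromRel_adj, Finset.mem_insert, Finset.mem_singleton]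
    rcases y with (⟨⟩|⟨⟩) | (⟨i',j'⟩|⟨i',j'⟩) <;>
      simp [vV, wV, AV, BV, Fin.ext_iff, Prod.ext_iff] <;> omega
  · have e1 : (paF i j.val : GabkVert a b k) = AV i ⟨j.val - 1, by omega⟩ := by
      unfold paF; rw [dif_neg h0, dif_pos (by omega)]
    have e2 : (paF i (j.val + 2) : GabkVert a b k) = wV a b k := by
      unfold paF; rw [dif_neg (by omega), dif_neg (by omega)]
    rw [e1, e2]
    ext y
    rw [Set.mem_toFinset]
    simp only [closedNbhd, Set.mem_toFinset, Set.mem_insert_iff, SimpleGraph.mem_neighborSet,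
      Gabk, SimpleGraph.fromRel_adj, Finset.mem_insert, Finset.mem_singleton]
    rcases y with (⟨⟩|⟨⟩) | (⟨i',j'⟩|⟨i',j'⟩) <;>
      simp [vV, wV, AV, BV, Fin.ext_iff, Prod.ext_iff] <;> omega
  · have e1 : (paF i j.val : GabkVert a b k) = AV i ⟨j.val - 1, by omega⟩ := by
      unfold paF; rw [dif_neg h0, dif_pos (by omega)]
    have e2 : (paF i (j.val + 2) : GabkVert a b k) = AV i ⟨j.val + 1, by omega⟩ := by
      unfold paF; rw [dif_neg (by omega), dif_pos (by omega)]; simp [AV, Fin.ext_iff]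
    rw [e1, e2]
    ext y
    rw [Set.mem_toFinset]
    simp only [closedNbhd, Set.mem_toFinset, Set.mem_insert_iff, SimpleGraph.mem_neighborSet,
      Gabk, SimpleGraph.fromRel_adj, Finset.mem_insert, Finset.mem_singleton]
    rcases y with (⟨⟩|⟨⟩) | (⟨i',j'⟩|⟨i',j'⟩) <;>
      simp [vV, wV, AV, BV, Fin.ext_iff, Prod.ext_iff] <;> omega

set_option maxRecDepth 10000 in
lemma cnB (hk : 0 < k) (i : Fin b) (j : Fin (3*k+1)) :
    (closedNbhd (Gabk a b k) (BV i j)).toFinset =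
      ({pbF i j.val, BV i j, pbF i (j.val + 2)} : Finset (GabkVert a b k)) := by
  have hj := j.isLt
  by_cases h0 : j.val = 0 <;> by_cases hl : j.val + 1 = 3*k+1
  · omega
  · have e1 : (pbF i j.val : GabkVert a b k) = vV a b k := by
      unfold pbF; rw [dif_pos h0]
    have e2 : (pbF i (j.val + 2) : GabkVert a b k) = BV i ⟨j.val + 1, by omega⟩ := by
      unfold pbF; rw [dif_neg (by omega), dif_pos (by omega)]; simp [BV, Fin.ext_iff]
    rw [e1, e2]
    ext y
    rw [Set.mem_toFinset]
    simp only [closedNbhd, Set.mem_toFinset, Set.mem_insert_iff, SimpleGraph.mem_neighborSet,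
      Gabk, SimpleGraph.fromRel_adj, Finset.mem_insert, Finset.mem_singleton]
    rcases y with (⟨⟩|⟨⟩) | (⟨i',j'⟩|⟨i',j'⟩) <;>
      simp [vV, wV, AV, BV, Fin.ext_iff, Prod.ext_iff, -Fin.val_eq_zero_iff] <;> omega
  · have e1 : (pbF i j.val : GabkVert a b k) = BV i ⟨j.val - 1, by omega⟩ := by
      unfold pbF; rw [dif_neg h0, dif_pos (by omega)]
    have e2 : (pbF i (j.val + 2) : GabkVert a b k) = wV a b k := by
      unfold pbF; rw [dif_neg (by omega), dif_neg (by omega)]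
    rw [e1, e2]
    ext y
    rw [Set.mem_toFinset]
    simp only [closedNbhd, Set.mem_toFinset, Set.mem_insert_iff, SimpleGraph.mem_neighborSet,
      Gabk, SimpleGraph.fromRel_adj, Finset.mem_insert, Finset.mem_singleton]
    rcases y with (⟨⟩|⟨⟩) | (⟨i',j'⟩|⟨i',j'⟩) <;>
      simp [vV, wV, AV, BV, Fin.ext_iff, Prod.ext_iff, -Fin.val_eq_zero_iff] <;> omega
  · have e1 : (pbF i j.val : GabkVert a b k) = BV i ⟨j.val - 1, by omega⟩ := by
      unfold pbF; rw [dif_neg h0, dif_pos (by omega)]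
    have e2 : (pbF i (j.val + 2) : GabkVert a b k) = BV i ⟨j.val + 1, by omega⟩ := by
      unfold pbF; rw [dif_neg (by omega), dif_pos (by omega)]; simp [BV, Fin.ext_iff]
    rw [e1, e2]
    ext y
    rw [Set.mem_toFinset]
    simp only [closedNbhd, Set.mem_toFinset, Set.mem_insert_iff, SimpleGraph.mem_neighborSet,
      Gabk, SimpleGraph.fromRel_adj, Finset.mem_insert, Finset.mem_singleton]
    rcases y with (⟨⟩|⟨⟩) | (⟨i',j'⟩|⟨i',j'⟩) <;>
      simp [vV, wV, AV, BV, Fin.ext_iff, Prod.ext_iff, -Fin.val_eq_zero_iff] <;> omega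

set_option maxRecDepth 10000 in
lemma cnV (hk : 0 < k) :
    (closedNbhd (Gabk a b k) (vV a b k)).toFinset =
      insert (vV a b k)
        ((Finset.univ.image fun i : Fin a => AV i ⟨0, by omega⟩) ∪
         (Finset.univ.image fun i : Fin b => BV i ⟨0, by omega⟩)) := by
  ext y
  rw [Set.mem_toFinset]
  simp only [closedNbhd, Set.mem_toFinset, Set.mem_insert_iff, SimpleGraph.mem_neighborSet,
    Gabk, SimpleGraph.fromRel_adj, Finset.mem_insert, Finset.mem_union, Finset.mem_image,
    Finset.mem_univ, true_and]
  rcases y with (⟨⟩|⟨⟩) | (⟨i',j'⟩|⟨i',j'⟩) <;>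
    simp [vV, wV, AV, BV, Fin.ext_iff, Prod.ext_iff, -Fin.val_eq_zero_iff] <;> omega

lemma cnW (hk : 0 < k) :
    (closedNbhd (Gabk a b k) (wV a b k)).toFinset =
      insert (wV a b k)
        ((Finset.univ.image fun i : Fin a => AV i ⟨3*k-1, by omega⟩) ∪
         (Finset.univ.image fun i : Fin b => BV i ⟨3*k, by omega⟩)) := by
  ext y
  rw [Set.mem_toFinset]
  simp only [closedNbhd, Set.mem_toFinset, Set.mem_insert_iff, SimpleGraph.mem_neighborSet,
    Gabk, SimpleGraph.fromRel_adj, Finset.mem_insert, Finset.mem_union, Finset.mem_image,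
    Finset.mem_univ, true_and]
  rcases y with (⟨⟩|⟨⟩) | (⟨i',j'⟩|⟨i',j'⟩) <;>
    simp [vV, wV, AV, BV, Fin.ext_iff, Prod.ext_iff] <;> omega

noncomputable def indD {V : Type*} (D : Set V) (x : V) : ZMod 2 := if x ∈ D then 1 else 0

lemma parity_eq' {V : Type*} [Fintype V] (S D : Set V) :
    (((S ∩ D).ncard : ZMod 2)) = ∑ y ∈ S.toFinset, indD D y := by
  unfold indD; exact parity_eq S D

end GabkAux

open GabkAux

theorem Gabk_endpoints_odd (a b k : ℕ) (ha : 0 < a) (hb : 0 < b) (hk : 0 < k)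
    (haodd : Odd a) (hbodd : Odd b) (D : Set (GabkVert a b k))
    (hD : ∀ x : GabkVert a b k, (∃ y, x = Sum.inr y) →
      Odd ((closedNbhd (Gabk a b k) x ∩ D).ncard)) :
    Odd ((closedNbhd (Gabk a b k) (Sum.inl (Sum.inl ())) ∩ D).ncard) ∧
    Odd ((closedNbhd (Gabk a b k) (Sum.inl (Sum.inr ())) ∩ D).ncard) := by
  set f : GabkVert a b k → ZMod 2 := indD D with hf
  -- constraints in ZMod 2 form
  have hD' : ∀ (x : GabkVert a b k), (∃ y, x = Sum.inr y) →
      ∑ y ∈ (closedNbhd (Gabk a b k) x).toFinset, f y = 1 := by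
    intro x hx
    have h := (odd_iff_zmod _).mp (hD x hx)
    rwa [parity_eq'] at h
  -- a-path local equations
  have hA : ∀ (i : Fin a) (t : ℕ), t + 2 ≤ 3*k+1 →
      f (paF i t) + f (paF i (t+1)) + f (paF i (t+2)) = 1 := by
    intro i t ht
    have h1 := hD' (AV i ⟨t, by omega⟩) ⟨_, rfl⟩
    rw [cnA i ⟨t, by omega⟩] at h1
    have e1 : (paF i (t+1) : GabkVert a b k) = AV i ⟨t, by omega⟩ :=
      paF_succ i ⟨t, by omega⟩
    have hd1 : (paF i t : GabkVert a b k) ≠ AV i ⟨t, by omega⟩ := by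
      rw [← e1]; intro h; have := paF_inj i (by omega) (by omega) h; omega
    have hd2 : (paF i t : GabkVert a b k) ≠ paF i (t+2) := by
      intro h; have := paF_inj i (by omega) (by omega) h; omega
    have hd3 : (AV i ⟨t, by omega⟩ : GabkVert a b k) ≠ paF i (t+2) := by
      rw [← e1]; intro h; have := paF_inj i (by omega) (by omega) h; omega
    rw [sum3 f hd1 hd2 hd3] at h1
    rw [e1]; exact h1
  -- b-path local equations
  have hB : ∀ (i : Fin b) (t : ℕ), t + 2 ≤ 3*k+2 →
      f (pbF i t) + f (pbF i (t+1)) + f (pbF i (t+2)) = 1 := by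
    intro i t ht
    have h1 := hD' (BV i ⟨t, by omega⟩) ⟨_, rfl⟩
    rw [cnB hk i ⟨t, by omega⟩] at h1
    have e1 : (pbF i (t+1) : GabkVert a b k) = BV i ⟨t, by omega⟩ :=
      pbF_succ i ⟨t, by omega⟩
    have hd1 : (pbF i t : GabkVert a b k) ≠ BV i ⟨t, by omega⟩ := by
      rw [← e1]; intro h; have := pbF_inj i (by omega) (by omega) h; omega
    have hd2 : (pbF i t : GabkVert a b k) ≠ pbF i (t+2) := by
      intro h; have := pbF_inj i (by omega) (by omega) h; omega
    have hd3 : (BV i ⟨t, by omega⟩ : GabkVert a b k) ≠ pbF i (t+2) := by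
      rw [← e1]; intro h; have := pbF_inj i (by omega) (by omega) h; omega
    rw [sum3 f hd1 hd2 hd3] at h1
    rw [e1]; exact h1
  -- periodicity
  have hAper : ∀ (i : Fin a) (t : ℕ), t + 3 ≤ 3*k+1 →
      f (paF i (t+3)) = f (paF i t) := by
    intro i t ht
    have h1 := hA i t (by omega)
    have h2 := hA i (t+1) (by omega)
    simp only [show t+1+1 = t+2 from rfl, show t+1+2 = t+3 from rfl] at h2
    linear_combination h2 - h1
  have hBper : ∀ (i : Fin b) (t : ℕ), t + 3 ≤ 3*k+2 →
      f (pbF i (t+3)) = f (pbF i t) := by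
    intro i t ht
    have h1 := hB i t (by omega)
    have h2 := hB i (t+1) (by omega)
    simp only [show t+1+1 = t+2 from rfl, show t+1+2 = t+3 from rfl] at h2
    linear_combination h2 - h1
  have hAmul : ∀ (i : Fin a) (m t : ℕ), t + 3*m ≤ 3*k+1 →
      f (paF i (t + 3*m)) = f (paF i t) := by
    intro i m
    induction m with
    | zero => intro t ht; norm_num
    | succ m ih =>
      intro t ht
      have e : t + 3*(m+1) = (t + 3*m) + 3 := by ring
      rw [e, hAper i (t + 3*m) (by omega), ih t (by omega)]
  have hBmul : ∀ (i : Fin b) (m t : ℕ), t + 3*m ≤ 3*k+2 →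
      f (pbF i (t + 3*m)) = f (pbF i t) := by
    intro i m
    induction m with
    | zero => intro t ht; norm_num
    | succ m ih =>
      intro t ht
      have e : t + 3*(m+1) = (t + 3*m) + 3 := by ring
      rw [e, hBper i (t + 3*m) (by omega), ih t (by omega)]
  -- evaluate the extended path functions at special points
  have epa0 : ∀ i : Fin a, (paF i 0 : GabkVert a b k) = vV a b k := by
    intro i; unfold paF; rw [dif_pos rfl]
  have epa1 : ∀ i : Fin a, (paF i 1 : GabkVert a b k) = AV i ⟨0, by omega⟩ := by
    intro i; unfold paF; rw [dif_neg (by omega), dif_pos (by omega)]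
  have epaK : ∀ i : Fin a, (paF i (3*k) : GabkVert a b k) = AV i ⟨3*k-1, by omega⟩ := by
    intro i; unfold paF; rw [dif_neg (by omega), dif_pos (by omega)]; try simp [AV, Fin.ext_iff]
  have epaW : ∀ i : Fin a, (paF i (3*k+1) : GabkVert a b k) = wV a b k := by
    intro i; unfold paF; rw [dif_neg (by omega), dif_neg (by omega)]
  have epb0 : ∀ i : Fin b, (pbF i 0 : GabkVert a b k) = vV a b k := by
    intro i; unfold pbF; rw [dif_pos rfl]
  have epb1 : ∀ i : Fin b, (pbF i 1 : GabkVert a b k) = BV i ⟨0, by omega⟩ := by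
    intro i; unfold pbF; rw [dif_neg (by omega), dif_pos (by omega)]
  have epbK : ∀ i : Fin b, (pbF i (3*k+1) : GabkVert a b k) = BV i ⟨3*k, by omega⟩ := by
    intro i; unfold pbF; rw [dif_neg (by omega), dif_pos (by omega)]; try simp [BV, Fin.ext_iff]
  have epbW : ∀ i : Fin b, (pbF i (3*k+2) : GabkVert a b k) = wV a b k := by
    intro i; unfold pbF; rw [dif_neg (by omega), dif_neg (by omega)]
  -- consequences: values at first/last internal vertices
  have hAfirst : ∀ i : Fin a, f (AV i ⟨0, by omega⟩) = f (wV a b k) := by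
    intro i
    have h := hAmul i k 1 (by omega)
    rw [show 1 + 3*k = 3*k+1 from by omega, epaW i, epa1 i] at h
    exact h.symm
  have hAlast : ∀ i : Fin a, f (AV i ⟨3*k-1, by omega⟩) = f (vV a b k) := by
    intro i
    have h := hAmul i k 0 (by omega)
    rw [show 0 + 3*k = 3*k from by omega, epaK i, epa0 i] at h
    exact h
  have hBfirst : ∀ i : Fin b, f (BV i ⟨0, by omega⟩) = 1 - f (vV a b k) - f (wV a b k) := by
    intro i
    have h := hBmul i k 2 (by omega)
    rw [show 2 + 3*k = 3*k+2 from by omega, epbW i] at h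
    have h0 := hB i 0 (by omega)
    rw [epb0 i, epb1 i] at h0
    -- h : f wV = f (pbF i 2), h0 : f vV + f (BV i 0) + f (pbF i (0+2)) = 1
    simp only [show (0:ℕ)+1 = 1 from rfl, show (0:ℕ)+2 = 2 from rfl] at h0
    linear_combination h0 + h
  have hBlast : ∀ i : Fin b, f (BV i ⟨3*k, by omega⟩) = 1 - f (vV a b k) - f (wV a b k) := by
    intro i
    have h := hBmul i k 1 (by omega)
    rw [show 1 + 3*k = 3*k+1 from by omega, epbK i, epb1 i] at h
    rw [h]; exact hBfirst i
  -- casts of a and b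
  have ca : ((a : ℕ) : ZMod 2) = 1 := by
    rw [← ZMod.natCast_mod, Nat.odd_iff.mp haodd]; norm_num
  have cb : ((b : ℕ) : ZMod 2) = 1 := by
    rw [← ZMod.natCast_mod, Nat.odd_iff.mp hbodd]; norm_num
  -- injectivity and disjointness facts for the hub sums
  constructor
  · -- the vertex v
    rw [odd_iff_zmod, parity_eq']
    simp only [← hf]
    rw [show (Sum.inl (Sum.inl ()) : GabkVert a b k) = vV a b k from rfl, cnV hk]
    rw [Finset.sum_insert (by simp [vV, AV, BV])]
    rw [Finset.sum_union (by simp [Finset.disjoint_left, AV, BV])]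
    rw [Finset.sum_image (by intro i _ i' _ h; simpa [AV] using h)]
    rw [Finset.sum_image (by intro i _ i' _ h; simpa [BV] using h)]
    rw [Finset.sum_congr rfl (fun i _ => hAfirst i), Finset.sum_congr rfl (fun i _ => hBfirst i)]
    rw [Finset.sum_const, Finset.sum_const, Finset.card_univ, Finset.card_univ,
      Fintype.card_fin, Fintype.card_fin, nsmul_eq_mul, nsmul_eq_mul, ca, cb]
    show f (vV a b k) + _ = 1
    ring
  · -- the vertex w
    rw [odd_iff_zmod, parity_eq']
    simp only [← hf]
    rw [show (Sum.inl (Sum.inr ()) : GabkVert a b k) = wV a b k from rfl, cnW hk]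
    rw [Finset.sum_insert (by simp [wV, AV, BV])]
    rw [Finset.sum_union (by simp [Finset.disjoint_left, AV, BV])]
    rw [Finset.sum_image (by intro i _ i' _ h; simpa [AV] using h)]
    rw [Finset.sum_image (by intro i _ i' _ h; simpa [BV] using h)]
    rw [Finset.sum_congr rfl (fun i _ => hAlast i), Finset.sum_congr rfl (fun i _ => hBlast i)]
    rw [Finset.sum_const, Finset.sum_const, Finset.card_univ, Finset.card_univ,
      Fintype.card_fin, Fintype.card_fin, nsmul_eq_mul, nsmul_eq_mul, ca, cb]
    show f (wV a b k) + _ = 1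
    ring
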